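/- The interval delta is complete in the following sense. Let a timestamped log over [t0, t_cur] starting from a well-formed graph SG_{t0} be given and let t' ∈ [t0, t_cur]. Then: (a) a node v belongs to V(SG_{t'}) if and only if either some logged node operation on v (an addNode(v) or remNode(v)) has timestamp ≤ t' and the last such operation in the log order is addNode(v), or no logged node operation on v has timestamp ≤ t' and v ∈ V(SG_{t0}); (b) an edge {v,w} belongs to E(SG_{t'}) if and only if either some logged edge operation on {v,w} (an addEdge(v,w) or remEdge(v,w)) has timestamp ≤ t' and the last such operation in the log order is addEdge(v,w), or no logged edge operation on {v,w} has timestamp ≤ t' and {v,w} ∈ E(SG_{t0}). -/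

import Mathlib

/-- A graph over a node type `α`: a set of nodes and a set of edges
(unordered pairs of nodes). -/
structure LogGraph (α : Type*) where
  V : Set α
  E : Set (Sym2 α)

/-- A graph is well-formed if its edges are pairs of *distinct* nodes and
both endpoints of every edge belong to the node set. -/
def LogGraph.WellFormed {α : Type*} (G : LogGraph α) : Prop :=
  (∀ e ∈ G.E, ¬ e.IsDiag) ∧ ∀ e ∈ G.E, ∀ v ∈ e, v ∈ G.V

/-- Update operations on graphs. -/
inductive Op (α : Type*) where
  | addNode (v : α)
  | remNode (v : α)
  | addEdge (e : Sym2 α)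
  | remEdge (e : Sym2 α)

/-- The action of a single operation on a graph: `addNode v` adds the node `v`;
`remNode v` removes `v` and all edges incident to it; `addEdge e` adds the edge `e`;
`remEdge e` removes the edge `e`. -/
def applyOp {α : Type*} (G : LogGraph α) : Op α → LogGraph α
  | Op.addNode v => ⟨G.V ∪ {v}, G.E⟩
  | Op.remNode v => ⟨G.V \ {v}, {e ∈ G.E | v ∉ e}⟩
  | Op.addEdge e => ⟨G.V, G.E ∪ {e}⟩
  | Op.remEdge e => ⟨G.V, G.E \ {e}⟩

/-- Applying a sequence of operations to a graph, from left to right. -/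
def applySeq {α : Type*} (G : LogGraph α) (l : List (Op α)) : LogGraph α :=
  l.foldl applyOp G

/-- Validity of an operation at a graph. -/
def validAt {α : Type*} (G : LogGraph α) : Op α → Prop
  | Op.addNode v => v ∉ G.V
  | Op.remNode v => v ∈ G.V ∧ ∀ e ∈ G.E, v ∉ e
  | Op.addEdge e => ¬ e.IsDiag ∧ (∀ v ∈ e, v ∈ G.V) ∧ e ∉ G.E
  | Op.remEdge e => e ∈ G.E

/-- The inverse of an operation. -/
def Op.inv {α : Type*} : Op α → Op α
  | Op.addNode v => Op.remNode v
  | Op.remNode v => Op.addNode v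
  | Op.addEdge e => Op.remEdge e
  | Op.remEdge e => Op.addEdge e

/-- Validity of a sequence of operations at a graph: each operation is valid at the
graph obtained by applying the preceding operations. -/
def validSeq {α : Type*} : LogGraph α → List (Op α) → Prop
  | _, [] => True
  | G, op :: rest => validAt G op ∧ validSeq (applyOp G op) rest
/-- The snapshot at time `t` determined by an initial graph `SG0` and a timestamped
log `L`: the result of applying to `SG0` the logged operations with timestamp `≤ t`. -/
def snapshot {α τ : Type*} [LinearOrder τ] (SG0 : LogGraph α) (L : List (Op α × τ))
    (t : τ) : LogGraph α :=
  applySeq SG0 ((L.filter fun p => decide (p.2 ≤ t)).map Prod.fst)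

/-- `op` is a node operation on the node `v`, i.e. `addNode v` or `remNode v`. -/
def isNodeOpOn {α : Type*} [DecidableEq α] (v : α) : Op α → Bool
  | Op.addNode w => decide (w = v)
  | Op.remNode w => decide (w = v)
  | _ => false

/-- `op` is an edge operation on the edge `e`, i.e. `addEdge e` or `remEdge e`. -/
def isEdgeOpOn {α : Type*} [DecidableEq α] (e : Sym2 α) : Op α → Bool
  | Op.addEdge f => decide (f = e)
  | Op.remEdge f => decide (f = e)
  | _ => false

private lemma last_cons_or {β : Type*} (a : β) (l : List β) (x : β) (Q : Prop) :
    ((a :: l).getLast? = some x ∨ (a :: l = [] ∧ Q)) ↔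
      (l.getLast? = some x ∨ (l = [] ∧ a = x)) := by
  cases l with
  | nil => simp
  | cons b t => simp [List.getLast?_cons_cons]

private lemma node_aux {α : Type*} [DecidableEq α] (v : α) :
    ∀ (l : List (Op α)) (G : LogGraph α),
      v ∈ (applySeq G l).V ↔
        ((l.filter (isNodeOpOn v)).getLast? = some (Op.addNode v) ∨
          ((l.filter (isNodeOpOn v)) = [] ∧ v ∈ G.V)) := by
  intro l
  induction l with
  | nil => intro G; simp [applySeq]
  | cons op rest ih =>
    intro G
    rw [show applySeq G (op :: rest) = applySeq (applyOp G op) rest from rfl, ih]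
    cases op with
    | addNode w =>
      by_cases hw : w = v
      · subst hw
        rw [show (Op.addNode w :: rest).filter (isNodeOpOn w)
              = Op.addNode w :: rest.filter (isNodeOpOn w) by
            simp [List.filter_cons, isNodeOpOn]]
        rw [last_cons_or]
        constructor
        · rintro (h | ⟨h1, h2⟩)
          · exact Or.inl h
          · exact Or.inr ⟨h1, rfl⟩
        · rintro (h | ⟨h1, _⟩)
          · exact Or.inl h
          · exact Or.inr ⟨h1, by simp [applyOp]⟩
      · rw [show (Op.addNode w :: rest).filter (isNodeOpOn v)
              = rest.filter (isNodeOpOn v) by simp [List.filter_cons, isNodeOpOn, hw]]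
        have : v ∈ (applyOp G (Op.addNode w)).V ↔ v ∈ G.V := by
          simp [applyOp, Ne.symm hw]
        rw [this]
    | remNode w =>
      by_cases hw : w = v
      · subst hw
        rw [show (Op.remNode w :: rest).filter (isNodeOpOn w)
              = Op.remNode w :: rest.filter (isNodeOpOn w) by
            simp [List.filter_cons, isNodeOpOn]]
        rw [last_cons_or]
        constructor
        · rintro (h | ⟨h1, h2⟩)
          · exact Or.inl h
          · exact absurd h2 (by simp [applyOp])
        · rintro (h | ⟨_, h2⟩)
          · exact Or.inl h
          · exact absurd h2 (by simp)
      · rw [show (Op.remNode w :: rest).filter (isNodeOpOn v)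
              = rest.filter (isNodeOpOn v) by simp [List.filter_cons, isNodeOpOn, hw]]
        have : v ∈ (applyOp G (Op.remNode w)).V ↔ v ∈ G.V := by
          simp [applyOp, Ne.symm hw]
        rw [this]
    | addEdge f =>
      rw [show (Op.addEdge f :: rest).filter (isNodeOpOn v)
            = rest.filter (isNodeOpOn v) by simp [List.filter_cons, isNodeOpOn]]
      rfl
    | remEdge f =>
      rw [show (Op.remEdge f :: rest).filter (isNodeOpOn v)
            = rest.filter (isNodeOpOn v) by simp [List.filter_cons, isNodeOpOn]]
      rfl

private lemma edge_aux {α : Type*} [DecidableEq α] (e : Sym2 α) :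
    ∀ (l : List (Op α)) (G : LogGraph α), validSeq G l →
      (e ∈ (applySeq G l).E ↔
        ((l.filter (isEdgeOpOn e)).getLast? = some (Op.addEdge e) ∨
          ((l.filter (isEdgeOpOn e)) = [] ∧ e ∈ G.E))) := by
  intro l
  induction l with
  | nil => intro G _; simp [applySeq]
  | cons op rest ih =>
    intro G hval
    obtain ⟨hop, hrest⟩ := hval
    rw [show applySeq G (op :: rest) = applySeq (applyOp G op) rest from rfl,
      ih _ hrest]
    cases op with
    | addEdge f =>
      by_cases hf : f = e
      · subst hf
        rw [show (Op.addEdge f :: rest).filter (isEdgeOpOn f)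
              = Op.addEdge f :: rest.filter (isEdgeOpOn f) by
            simp [List.filter_cons, isEdgeOpOn]]
        rw [last_cons_or]
        constructor
        · rintro (h | ⟨h1, h2⟩)
          · exact Or.inl h
          · exact Or.inr ⟨h1, rfl⟩
        · rintro (h | ⟨h1, _⟩)
          · exact Or.inl h
          · exact Or.inr ⟨h1, by simp [applyOp]⟩
      · rw [show (Op.addEdge f :: rest).filter (isEdgeOpOn e)
              = rest.filter (isEdgeOpOn e) by simp [List.filter_cons, isEdgeOpOn, hf]]
        have : e ∈ (applyOp G (Op.addEdge f)).E ↔ e ∈ G.E := by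
          simp [applyOp, Ne.symm hf]
        rw [this]
    | remEdge f =>
      by_cases hf : f = e
      · subst hf
        rw [show (Op.remEdge f :: rest).filter (isEdgeOpOn f)
              = Op.remEdge f :: rest.filter (isEdgeOpOn f) by
            simp [List.filter_cons, isEdgeOpOn]]
        rw [last_cons_or]
        constructor
        · rintro (h | ⟨h1, h2⟩)
          · exact Or.inl h
          · exact absurd h2 (by simp [applyOp])
        · rintro (h | ⟨_, h2⟩)
          · exact Or.inl h
          · exact absurd h2 (by simp)
      · rw [show (Op.remEdge f :: rest).filter (isEdgeOpOn e)
              = rest.filter (isEdgeOpOn e) by simp [List.filter_cons, isEdgeOpOn, hf]]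
        have : e ∈ (applyOp G (Op.remEdge f)).E ↔ e ∈ G.E := by
          simp [applyOp, Ne.symm hf]
        rw [this]
    | addNode w =>
      rw [show (Op.addNode w :: rest).filter (isEdgeOpOn e)
            = rest.filter (isEdgeOpOn e) by simp [List.filter_cons, isEdgeOpOn]]
      rfl
    | remNode w =>
      rw [show (Op.remNode w :: rest).filter (isEdgeOpOn e)
            = rest.filter (isEdgeOpOn e) by simp [List.filter_cons, isEdgeOpOn]]
      have : e ∈ (applyOp G (Op.remNode w)).E ↔ e ∈ G.E := by
        simp only [applyOp]
        constructor
        · rintro ⟨h, _⟩; exact h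
        · intro h; exact ⟨h, hop.2 e h⟩
      rw [this]

private lemma validSeq_append_left {α : Type*} :
    ∀ (l1 l2 : List (Op α)) (G : LogGraph α), validSeq G (l1 ++ l2) → validSeq G l1 := by
  intro l1
  induction l1 with
  | nil => intro _ _ _; trivial
  | cons a t ih =>
    intro l2 G h
    exact ⟨h.1, ih l2 _ h.2⟩

private lemma filter_eq_takeWhile_of_pairwise {β : Type*} (p : β → Bool)
    (R : β → β → Prop) (hcl : ∀ a b, R a b → p b = true → p a = true) :
    ∀ l : List β, l.Pairwise R → l.filter p = l.takeWhile p := by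
  intro l
  induction l with
  | nil => intro _; rfl
  | cons a t ih =>
    intro hp
    rw [List.pairwise_cons] at hp
    by_cases ha : p a = true
    · simp [List.filter_cons, List.takeWhile_cons, ha, ih hp.2]
    · have ht : t.filter p = [] := by
        rw [List.filter_eq_nil_iff]
        intro b hb hpb
        exact ha (hcl a b (hp.1 b hb) hpb)
      simp [List.filter_cons, List.takeWhile_cons, ha, ht]

/-- Completeness of the interval delta: for every `t'` in `[t0, tcur]`,
(a) a node `v` belongs to the snapshot at `t'` iff the last logged node operation on `v`
with timestamp `≤ t'` is `addNode v`, or there is no such operation and `v` is a node of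
the initial graph; (b) an edge `e` belongs to the snapshot at `t'` iff the last logged
edge operation on `e` with timestamp `≤ t'` is `addEdge e`, or there is no such operation
and `e` is an edge of the initial graph. -/
theorem interval_delta_complete {α τ : Type*} [DecidableEq α] [LinearOrder τ]
    (t0 tcur : τ) (SG0 : LogGraph α) (L : List (Op α × τ))
    (hwf : SG0.WellFormed)
    (hts : ∀ p ∈ L, t0 ≤ p.2 ∧ p.2 ≤ tcur)
    (hmono : L.Pairwise fun p q => p.2 ≤ q.2)
    (hval : validSeq SG0 (L.map Prod.fst))
    (t' : τ) (ht' : t0 ≤ t' ∧ t' ≤ tcur) :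
    (∀ v : α,
      v ∈ (snapshot SG0 L t').V ↔
        (((L.filter fun p => decide (p.2 ≤ t')).map Prod.fst).filter
            (isNodeOpOn v)).getLast? = some (Op.addNode v) ∨
        ((((L.filter fun p => decide (p.2 ≤ t')).map Prod.fst).filter
            (isNodeOpOn v)) = [] ∧ v ∈ SG0.V)) ∧
    (∀ e : Sym2 α, ¬ e.IsDiag →
      (e ∈ (snapshot SG0 L t').E ↔
        (((L.filter fun p => decide (p.2 ≤ t')).map Prod.fst).filter
            (isEdgeOpOn e)).getLast? = some (Op.addEdge e) ∨
        ((((L.filter fun p => decide (p.2 ≤ t')).map Prod.fst).filter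
            (isEdgeOpOn e)) = [] ∧ e ∈ SG0.E))) := by
  set pred : Op α × τ → Bool := fun p => decide (p.2 ≤ t') with hpred
  have hfil : L.filter pred = L.takeWhile pred := by
    apply filter_eq_takeWhile_of_pairwise pred (fun p q => p.2 ≤ q.2)
    · intro a b hR hb
      simp only [hpred, decide_eq_true_eq] at hb ⊢
      exact le_trans hR hb
    · exact hmono
  have hsplit : L = L.takeWhile pred ++ L.dropWhile pred :=
    (List.takeWhile_append_dropWhile (p := pred) (l := L)).symm
  have hvalid : validSeq SG0 ((L.filter pred).map Prod.fst) := by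
    rw [hfil]
    apply validSeq_append_left _ ((L.dropWhile pred).map Prod.fst)
    rw [← List.map_append, ← hsplit]
    exact hval
  refine ⟨fun v => ?_, fun e _ => ?_⟩
  · exact node_aux v _ SG0
  · exact edge_aux e _ SG0 hvalid
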